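/- Let (x1*, x2*) be the unique pure Nash equilibrium. Then x1* + x2* ≤ (m1 + m2)/2, with equality if and only if m1 = m2 = m/2 (i.e., t = 0 and the two pools have equal power). -/

import Mathlib

set_option maxHeartbeats 1000000

open Set Filter

/-- Average reward of pool 1 in the two-player miner's dilemma with betrayal,
where the total mining power is `m1 + m2 + t`. -/
noncomputable def r1 (m1 m2 t p x1 x2 : ℝ) : ℝ :=
  (m1*m2 + m1*x1 + p*m2*x2 - (1-p)*x1^2 - (1-p)*x1*x2) /
    (((m1+m2+t) - (1-p)*(x1+x2)) * (m1*m2 + m1*x1 + m2*x2))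

/-- Average reward of pool 2. -/
noncomputable def r2 (m1 m2 t p x1 x2 : ℝ) : ℝ :=
  (m1*m2 + m2*x2 + p*m1*x1 - (1-p)*x2^2 - (1-p)*x1*x2) /
    (((m1+m2+t) - (1-p)*(x1+x2)) * (m1*m2 + m1*x1 + m2*x2))

/-- `(x1, x2)` is a pure Nash equilibrium of the two-player miner's dilemma game. -/
noncomputable def IsNash (m1 m2 t p x1 x2 : ℝ) : Prop :=
  x1 ∈ Set.Icc 0 m1 ∧ x2 ∈ Set.Icc 0 m2 ∧
  (∀ x ∈ Set.Icc (0:ℝ) m1, r1 m1 m2 t p x x2 ≤ r1 m1 m2 t p x1 x2) ∧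
  (∀ x ∈ Set.Icc (0:ℝ) m2, r2 m1 m2 t p x1 x ≤ r2 m1 m2 t p x1 x2)

lemma deriv_nonneg_of_max_left {f : ℝ → ℝ} {l c f' : ℝ} (hl : l < c)
    (hmax : ∀ x ∈ Set.Icc l c, f x ≤ f c) (hf : HasDerivAt f f' c) : 0 ≤ f' := by
  have hd : HasDerivWithinAt f f' (Set.Iio c) c := hf.hasDerivWithinAt
  rw [hasDerivWithinAt_iff_tendsto_slope' (by simp)] at hd
  refine ge_of_tendsto hd ?_
  filter_upwards [Ioo_mem_nhdsLT hl] with z hz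
  rw [slope_def_field]
  have h1 : f z - f c ≤ 0 := sub_nonpos.2 (hmax z ⟨hz.1.le, hz.2.le⟩)
  have h2 : z - c < 0 := sub_neg.2 hz.2
  exact div_nonneg_of_nonpos h1 h2.le

lemma deriv_nonpos_of_max_right {f : ℝ → ℝ} {c r f' : ℝ} (hr : c < r)
    (hmax : ∀ x ∈ Set.Icc c r, f x ≤ f c) (hf : HasDerivAt f f' c) : f' ≤ 0 := by
  have hd : HasDerivWithinAt f f' (Set.Ioi c) c := hf.hasDerivWithinAt
  rw [hasDerivWithinAt_iff_tendsto_slope' (by simp)] at hd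
  refine le_of_tendsto hd ?_
  filter_upwards [Ioo_mem_nhdsGT hr] with z hz
  rw [slope_def_field]
  have h1 : f z - f c ≤ 0 := sub_nonpos.2 (hmax z ⟨hz.1.le, hz.2.le⟩)
  have h2 : 0 < z - c := sub_pos.2 hz.1
  exact div_nonpos_iff.2 (Or.inr ⟨h1, h2.le⟩)

lemma hasDerivAt_quad_div (c0 c1 c2 d0 d1 d2 z : ℝ) (hQ : d0 + d1*z + d2*z^2 ≠ 0) :
    HasDerivAt (fun w => (c0 + c1*w + c2*w^2) / (d0 + d1*w + d2*w^2))
      (((c1 + 2*c2*z) * (d0 + d1*z + d2*z^2) - (c0 + c1*z + c2*z^2) * (d1 + 2*d2*z)) /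
        (d0 + d1*z + d2*z^2)^2) z := by
  have hN : HasDerivAt (fun w : ℝ => c0 + c1*w + c2*w^2) (c1 + 2*c2*z) z := by
    have h := ((hasDerivAt_const z c0).add ((hasDerivAt_id' z).const_mul c1)).add
      ((hasDerivAt_pow 2 z).const_mul c2)
    refine h.congr_deriv ?_
    push_cast
    ring
  have hD : HasDerivAt (fun w : ℝ => d0 + d1*w + d2*w^2) (d1 + 2*d2*z) z := by
    have h := ((hasDerivAt_const z d0).add ((hasDerivAt_id' z).const_mul d1)).add
      ((hasDerivAt_pow 2 z).const_mul d2)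
    refine h.congr_deriv ?_
    push_cast
    ring
  exact hN.div hD hQ

lemma r1_deriv (m1 m2 t p x y : ℝ)
    (hQ : 0 < ((m1+m2+t) - (1-p)*(x+y)) * (m1*m2 + m1*x + m2*y)) :
    HasDerivAt (fun z => r1 m1 m2 t p z y)
      ((1-p) * ((m1*m2 + m1*x + m2*y) * (m1*m2 + p*m2*y - x*(m2+t)) -
          m2 * ((m1+m2+t) - (1-p)*(x+y)) * (m1*x + y*(x+y))) /
        (((m1+m2+t) - (1-p)*(x+y)) * (m1*m2 + m1*x + m2*y))^2) x := by
  have hQ' : ((m1+m2+t) - (1-p)*y)*(m1*m2+m2*y) +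
      (((m1+m2+t) - (1-p)*y)*m1 - (1-p)*(m1*m2+m2*y))*x + (-((1-p)*m1))*x^2 ≠ 0 := by
    have e : ((m1+m2+t) - (1-p)*y)*(m1*m2+m2*y) +
        (((m1+m2+t) - (1-p)*y)*m1 - (1-p)*(m1*m2+m2*y))*x + (-((1-p)*m1))*x^2
        = ((m1+m2+t) - (1-p)*(x+y)) * (m1*m2 + m1*x + m2*y) := by ring
    rw [e]
    exact hQ.ne'
  have h := hasDerivAt_quad_div (m1*m2 + p*m2*y) (m1 - (1-p)*y) (-(1-p))
    (((m1+m2+t) - (1-p)*y)*(m1*m2+m2*y))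
    (((m1+m2+t) - (1-p)*y)*m1 - (1-p)*(m1*m2+m2*y)) (-((1-p)*m1)) x hQ'
  have hfun : (fun z => r1 m1 m2 t p z y) =
      (fun w => ((m1*m2 + p*m2*y) + (m1 - (1-p)*y)*w + (-(1-p))*w^2) /
        (((m1+m2+t) - (1-p)*y)*(m1*m2+m2*y) +
          (((m1+m2+t) - (1-p)*y)*m1 - (1-p)*(m1*m2+m2*y))*w + (-((1-p)*m1))*w^2)) := by
    funext z
    unfold r1
    congr 1 <;> ring
  rw [hfun]
  convert h using 1
  congr 1 <;> ring

lemma r2_swap (m1 m2 t p x y : ℝ) : r2 m1 m2 t p x y = r1 m2 m1 t p y x := by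
  unfold r1 r2
  congr 1 <;> ring

lemma G1_bounds (m1 m2 t p x y : ℝ) (hp1 : p < 1) (hx0 : 0 ≤ x) (hxa : x ≤ m1)
    (hD : 0 < (m1+m2+t) - (1-p)*(x+y)) (hB : 0 < m1*m2 + m1*x + m2*y)
    (hmax : ∀ z ∈ Set.Icc (0:ℝ) m1, r1 m1 m2 t p z y ≤ r1 m1 m2 t p x y) :
    (0 < x → 0 ≤ (m1*m2 + m1*x + m2*y) * (m1*m2 + p*m2*y - x*(m2+t)) -
          m2 * ((m1+m2+t) - (1-p)*(x+y)) * (m1*x + y*(x+y))) ∧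
    (x < m1 → (m1*m2 + m1*x + m2*y) * (m1*m2 + p*m2*y - x*(m2+t)) -
          m2 * ((m1+m2+t) - (1-p)*(x+y)) * (m1*x + y*(x+y)) ≤ 0) := by
  have hQ := mul_pos hD hB
  have hder := r1_deriv m1 m2 t p x y hQ
  have hq : 0 < 1 - p := by linarith
  have hsq : 0 < (((m1+m2+t) - (1-p)*(x+y)) * (m1*m2 + m1*x + m2*y))^2 := by positivity
  constructor
  · intro hx
    have h := deriv_nonneg_of_max_left hx (fun z hz => hmax z ⟨hz.1, hz.2.trans hxa⟩) hder
    rw [le_div_iff₀ hsq, zero_mul] at h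
    exact nonneg_of_mul_nonneg_right h hq
  · intro hx
    have h := deriv_nonpos_of_max_right hx (fun z hz => hmax z ⟨hx0.trans hz.1, hz.2⟩) hder
    rw [div_le_iff₀ hsq, zero_mul] at h
    exact nonpos_of_mul_nonpos_right h hq

lemma le_of_sq {a s : ℝ} (ha : 0 < a) (hs : 0 ≤ s) (h : a*a - s^2 ≤ 0) : a ≤ s := by
  nlinarith

lemma conclusion (m1 m2 t p x y : ℝ) (hm1 : 0 < m1) (hm2 : 0 < m2) (ht : 0 ≤ t)
    (hp0 : 0 ≤ p) (hp1 : p < 1)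
    (hx0 : 0 ≤ x) (hxa : x ≤ m1) (hy0 : 0 ≤ y) (hyb : y ≤ m2)
    (hD : 0 < (m1+m2+t) - (1-p)*(x+y))
    (h1p : 0 < x → 0 ≤ (m1*m2 + m1*x + m2*y) * (m1*m2 + p*m2*y - x*(m2+t)) -
          m2 * ((m1+m2+t) - (1-p)*(x+y)) * (m1*x + y*(x+y)))
    (h1m : x < m1 → (m1*m2 + m1*x + m2*y) * (m1*m2 + p*m2*y - x*(m2+t)) -
          m2 * ((m1+m2+t) - (1-p)*(x+y)) * (m1*x + y*(x+y)) ≤ 0)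
    (h2p : 0 < y → 0 ≤ (m2*m1 + m2*y + m1*x) * (m2*m1 + p*m1*x - y*(m1+t)) -
          m1 * ((m2+m1+t) - (1-p)*(y+x)) * (m2*y + x*(y+x)))
    (h2m : y < m2 → (m2*m1 + m2*y + m1*x) * (m2*m1 + p*m1*x - y*(m1+t)) -
          m1 * ((m2+m1+t) - (1-p)*(y+x)) * (m2*y + x*(y+x)) ≤ 0) :
    x + y ≤ (m1 + m2)/2 ∧ (x + y = (m1 + m2)/2 ↔ (t = 0 ∧ m1 = m2)) := by
  obtain ⟨G1, hG1def⟩ : ∃ g : ℝ, g = (m1*m2 + m1*x + m2*y) * (m1*m2 + p*m2*y - x*(m2+t)) -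
          m2 * ((m1+m2+t) - (1-p)*(x+y)) * (m1*x + y*(x+y)) := ⟨_, rfl⟩
  obtain ⟨G2, hG2def⟩ : ∃ g : ℝ, g = (m2*m1 + m2*y + m1*x) * (m2*m1 + p*m1*x - y*(m1+t)) -
          m1 * ((m2+m1+t) - (1-p)*(y+x)) * (m2*y + x*(y+x)) := ⟨_, rfl⟩
  rw [← hG1def] at h1p h1m
  rw [← hG2def] at h2p h2m
  have hu : 0 ≤ m1*x + m2*y := add_nonneg (mul_nonneg hm1.le hx0) (mul_nonneg hm2.le hy0)
  have hab : 0 < m1*m2 := mul_pos hm1 hm2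
  -- boundary case x = 0
  have key0x : x = 0 → x + y ≤ m2/2 := by
    intro hx
    rcases hy0.lt_or_eq with hy | hy
    · have hg := h2p hy
      rw [hG2def, hx] at hg
      have e : (m2*m1 + m2*y + m1*0) * (m2*m1 + p*m1*0 - y*(m1+t)) -
          m1 * ((m2+m1+t) - (1-p)*(y+0)) * (m2*y + 0*(y+0))
          = m2 * (m1*m1*m2 - 2*m1*y*(m1+t) - y^2*(m1*p+t)) := by ring
      rw [e] at hg
      have hK : 0 ≤ m1*m1*m2 - 2*m1*y*(m1+t) - y^2*(m1*p+t) :=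
        nonneg_of_mul_nonneg_right hg hm2
      have h1 : 0 ≤ y^2*(m1*p+t) :=
        mul_nonneg (sq_nonneg y) (add_nonneg (mul_nonneg hm1.le hp0) ht)
      have h2 : 0 ≤ m1*y*t := mul_nonneg (mul_nonneg hm1.le hy0) ht
      have h3 : 0 ≤ m1*m1*(m2 - 2*y) := by nlinarith [hK, h1, h2]
      have h4 : 0 ≤ m2 - 2*y := nonneg_of_mul_nonneg_right h3 (mul_pos hm1 hm1)
      rw [hx]; linarith
    · rw [hx, ← hy]; linarith
  -- boundary case y = 0
  have key0y : y = 0 → x + y ≤ m1/2 := by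
    intro hy
    rcases hx0.lt_or_eq with hx | hx
    · have hg := h1p hx
      rw [hG1def, hy] at hg
      have e : (m1*m2 + m1*x + m2*0) * (m1*m2 + p*m2*0 - x*(m2+t)) -
          m2 * ((m1+m2+t) - (1-p)*(x+0)) * (m1*x + 0*(x+0))
          = m1 * (m2*m2*m1 - 2*m2*x*(m2+t) - x^2*(m2*p+t)) := by ring
      rw [e] at hg
      have hK : 0 ≤ m2*m2*m1 - 2*m2*x*(m2+t) - x^2*(m2*p+t) :=
        nonneg_of_mul_nonneg_right hg hm1
      have h1 : 0 ≤ x^2*(m2*p+t) :=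
        mul_nonneg (sq_nonneg x) (add_nonneg (mul_nonneg hm2.le hp0) ht)
      have h2 : 0 ≤ m2*x*t := mul_nonneg (mul_nonneg hm2.le hx0) ht
      have h3 : 0 ≤ m2*m2*(m1 - 2*x) := by nlinarith [hK, h1, h2]
      have h4 : 0 ≤ m1 - 2*x := nonneg_of_mul_nonneg_right h3 (mul_pos hm2 hm2)
      rw [hy]; linarith
    · rw [hy, ← hx]; linarith
  -- key identity
  have hid : m1*G1 + m2*G2 =
      (m1*m2*((m1+m2) - (1-p)*(x+y)))*(m1*m2 - (x+y)^2)
      - t*(2*m1*m2*(m1*x+m2*y) + (m1*x+m2*y)^2 + m1*m2*(x+y)^2) := by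
    rw [hG1def, hG2def]; ring
  have hCnn : 0 ≤ 2*m1*m2*(m1*x+m2*y) + (m1*x+m2*y)^2 + m1*m2*(x+y)^2 := by
    have := mul_nonneg hab.le hu
    have := sq_nonneg (m1*x+m2*y)
    have := mul_nonneg hab.le (sq_nonneg (x+y))
    linarith
  have htC : 0 ≤ t*(2*m1*m2*(m1*x+m2*y) + (m1*x+m2*y)^2 + m1*m2*(x+y)^2) :=
    mul_nonneg ht hCnn
  -- part 1 : the inequality
  have hA : x + y ≤ (m1 + m2)/2 := by
    by_contra hc
    push_neg at hc
    rcases hx0.lt_or_eq with hx | hx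
    swap
    · have := key0x hx.symm; linarith
    rcases hy0.lt_or_eq with hy | hy
    swap
    · have := key0y hy.symm; linarith
    have hg1 := h1p hx
    have hg2 := h2p hy
    have h0 : 0 ≤ m1*G1 + m2*G2 := add_nonneg (mul_nonneg hm1.le hg1) (mul_nonneg hm2.le hg2)
    have hs0 : 0 < x + y := by linarith
    have hps : 0 ≤ p*(x+y) := mul_nonneg hp0 hs0.le
    have hqs : 0 ≤ (m1+m2) - (1-p)*(x+y) := by nlinarith
    have hs2 : m1*m2 - (x+y)^2 < 0 := by nlinarith [sq_nonneg (m1-m2)]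
    rcases hqs.lt_or_eq with hq1 | hq1
    · have hneg : (m1*m2*((m1+m2) - (1-p)*(x+y)))*(m1*m2 - (x+y)^2) < 0 :=
        mul_neg_of_pos_of_neg (mul_pos hab hq1) hs2
      linarith [hid, h0, htC]
    · -- (1-p)(x+y) = m1+m2, so t = D > 0
      have htpos : 0 < t := by linarith [hD]
      have hCpos : 0 < 2*m1*m2*(m1*x+m2*y) + (m1*x+m2*y)^2 + m1*m2*(x+y)^2 := by
        have := mul_nonneg hab.le hu
        have := sq_nonneg (m1*x+m2*y)
        have := mul_pos hab (mul_pos hs0 hs0)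
        nlinarith
      have hz : (m1*m2*((m1+m2) - (1-p)*(x+y)))*(m1*m2 - (x+y)^2) = 0 := by
        rw [← hq1]; ring
      rw [hz] at hid
      linarith [hid, h0, mul_pos htpos hCpos]
  refine ⟨hA, ?_, ?_⟩
  · -- equality → t = 0 ∧ m1 = m2
    intro heq
    rcases hx0.lt_or_eq with hx | hx
    swap
    · exfalso; have := key0x hx.symm; linarith
    rcases hy0.lt_or_eq with hy | hy
    swap
    · exfalso; have := key0y hy.symm; linarith
    have hg1 := h1p hx
    have hg2 := h2p hy
    have h0 : 0 ≤ m1*G1 + m2*G2 := add_nonneg (mul_nonneg hm1.le hg1) (mul_nonneg hm2.le hg2)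
    have hs0 : 0 < x + y := by linarith
    have hps : 0 ≤ p*(x+y) := mul_nonneg hp0 hs0.le
    have hqs : 0 < (m1+m2) - (1-p)*(x+y) := by nlinarith
    have hfac : m1*m2 - (x+y)^2 = -((m1-m2)^2)/4 := by rw [heq]; ring
    have hneg : 0 ≤ (m1*m2*((m1+m2) - (1-p)*(x+y)))*(m1*m2 - (x+y)^2) := by
      linarith [hid, h0, htC]
    rw [hfac] at hneg
    have hMA : 0 < m1*m2*((m1+m2) - (1-p)*(x+y)) := mul_pos hab hqs
    have h4 : (m1-m2)^2 ≤ 0 := by nlinarith [hneg, hMA]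
    have h5 : (m1-m2)^2 = 0 := le_antisymm h4 (sq_nonneg _)
    have h12 : m1 = m2 := by
      have := pow_eq_zero_iff (n := 2) (by norm_num) |>.1 h5
      linarith
    refine ⟨?_, h12⟩
    have hzero : m1*m2 - (x+y)^2 = 0 := by rw [hfac, h12]; ring
    have hid2 : m1*G1 + m2*G2 =
        (m1*m2*((m1+m2) - (1-p)*(x+y)))*(m1*m2 - (x+y)^2)
        - t*(2*m1*m2*(m1*x+m2*y) + (m1*x+m2*y)^2 + m1*m2*(x+y)^2) := hid
    rw [hzero, mul_zero, zero_sub] at hid2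
    have hCpos : 0 < 2*m1*m2*(m1*x+m2*y) + (m1*x+m2*y)^2 + m1*m2*(x+y)^2 := by
      have := mul_nonneg hab.le hu
      have := sq_nonneg (m1*x+m2*y)
      have := mul_pos hab (mul_pos hs0 hs0)
      nlinarith
    have ht0 : t ≤ 0 := nonpos_of_mul_nonpos_left (by linarith [h0, hid2]) hCpos
    exact le_antisymm ht0 ht
  · -- t = 0 ∧ m1 = m2 → equality
    rintro ⟨ht0, h12⟩
    subst ht0
    subst h12
    rcases hxa.lt_or_eq with hx | hx
    swap
    · linarith [hA, hy0]
    rcases hyb.lt_or_eq with hy | hy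
    swap
    · linarith [hA, hx0]
    have hg1 := h1m hx
    have hg2 := h2m hy
    have e1 : m1*G1 ≤ 0 := by
      have := mul_le_mul_of_nonneg_left hg1 hm1.le
      rwa [mul_zero] at this
    have e2 : m1*G2 ≤ 0 := by
      have := mul_le_mul_of_nonneg_left hg2 hm1.le
      rwa [mul_zero] at this
    have hqs2 : 0 < 2*m1 - (1-p)*(x+y) := by
      nlinarith [mul_nonneg hp0 (add_nonneg hx0 hy0)]
    have hid3 : m1*G1 + m1*G2 = (m1*m1*(2*m1-(1-p)*(x+y)))*(m1*m1 - (x+y)^2) := by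
      rw [hG1def, hG2def]; ring
    have h6 : (m1*m1*(2*m1-(1-p)*(x+y)))*(m1*m1 - (x+y)^2) ≤ 0 := by
      linarith [hid3, e1, e2]
    have h5 : m1*m1 - (x+y)^2 ≤ 0 :=
      nonpos_of_mul_nonpos_right h6 (mul_pos (mul_pos hm1 hm1) hqs2)
    have h7 : m1 ≤ x+y := le_of_sq hm1 (add_nonneg hx0 hy0) h5
    linarith [hA, h7]

theorem stmt16 (m1 m2 t p : ℝ) (hm1 : 0 < m1) (hm2 : 0 < m2) (ht : 0 ≤ t)
    (hp0 : 0 ≤ p) (hp1 : p < 1) (x1s x2s : ℝ)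
    (hne : IsNash m1 m2 t p x1s x2s) :
    x1s + x2s ≤ (m1 + m2)/2 ∧
    (x1s + x2s = (m1 + m2)/2 ↔ (t = 0 ∧ m1 = m2)) := by
  obtain ⟨⟨hx0, hxa⟩, ⟨hy0, hyb⟩, h1max, h2max⟩ := hne
  have hab : 0 < m1*m2 := mul_pos hm1 hm2
  have hB : 0 < m1*m2 + m1*x1s + m2*x2s := by
    have := mul_nonneg hm1.le hx0
    have := mul_nonneg hm2.le hy0
    linarith
  -- excluding the degenerate corner
  have hcorner : ¬ (p = 0 ∧ t = 0 ∧ x1s = m1 ∧ x2s = m2) := by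
    rintro ⟨hp, ht0, hxx, hyy⟩
    subst hp; subst ht0
    have h := h1max 0 ⟨le_refl 0, hm1.le⟩
    rw [hxx, hyy] at h
    have h1 : r1 m1 m2 0 0 m1 m2 = 0 := by
      unfold r1
      rw [div_eq_zero_iff]
      left; ring
    have h2 : 0 < r1 m1 m2 0 0 0 m2 := by
      unfold r1
      have hnum : m1*m2 + m1*0 + 0*m2*m2 - (1-0)*0^2 - (1-0)*0*m2 = m1*m2 := by ring
      have hden : ((m1+m2+0) - (1-0)*(0+m2)) * (m1*m2 + m1*0 + m2*m2)
          = m1 * (m1*m2 + m2*m2) := by ring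
      rw [hnum, hden]
      apply div_pos hab
      apply mul_pos hm1
      nlinarith [mul_pos hm2 hm2]
    rw [h1] at h
    linarith
  -- positivity of the common denominator factor
  have hD : 0 < (m1+m2+t) - (1-p)*(x1s+x2s) := by
    have e : (m1+m2+t) - (1-p)*(x1s+x2s)
        = (m1 - x1s) + (m2 - x2s) + t + p*(x1s+x2s) := by ring
    have hps : 0 ≤ p*(x1s+x2s) := mul_nonneg hp0 (by linarith)
    have hge : 0 ≤ (m1+m2+t) - (1-p)*(x1s+x2s) := by rw [e]; linarith
    rcases hge.lt_or_eq with h | h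
    · exact h
    · exfalso
      have hx1 : x1s = m1 := by linarith [e, hps]
      have hx2 : x2s = m2 := by linarith [e, hps]
      have ht' : t = 0 := by linarith [e, hps]
      have hpz : p*(x1s+x2s) = 0 := by linarith [e]
      have hp' : p = 0 := by
        rcases mul_eq_zero.1 hpz with h' | h'
        · exact h'
        · exfalso; rw [hx1, hx2] at h'; linarith
      exact hcorner ⟨hp', ht', hx1, hx2⟩
  have hG1 := G1_bounds m1 m2 t p x1s x2s hp1 hx0 hxa hD hB h1max
  have hD' : 0 < (m2+m1+t) - (1-p)*(x2s+x1s) := by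
    have e : (m2+m1+t) - (1-p)*(x2s+x1s) = (m1+m2+t) - (1-p)*(x1s+x2s) := by ring
    rw [e]; exact hD
  have hB' : 0 < m2*m1 + m2*x2s + m1*x1s := by
    have e : m2*m1 + m2*x2s + m1*x1s = m1*m2 + m1*x1s + m2*x2s := by ring
    rw [e]; exact hB
  have h2max' : ∀ z ∈ Set.Icc (0:ℝ) m2,
      r1 m2 m1 t p z x1s ≤ r1 m2 m1 t p x2s x1s := by
    intro z hz
    rw [← r2_swap, ← r2_swap]
    exact h2max z hz
  have hG2 := G1_bounds m2 m1 t p x2s x1s hp1 hy0 hyb hD' hB' h2max'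
  exact conclusion m1 m2 t p x1s x2s hm1 hm2 ht hp0 hp1 hx0 hxa hy0 hyb hD
    hG1.1 hG1.2 hG2.1 hG2.2
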